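/- Let φ be the 4-form associated to a 3-fold vector cross product χ on an 8-dimensional real inner product space V (the Cayley form). There is no 5-dimensional subspace C ⊆ V on which φ vanishes identically. -/

import Mathlib

open scoped RealInnerProductSpace

section Aux

variable {V : Type*} [NormedAddCommGroup V] [InnerProductSpace ℝ V]

private lemma chi_swap01 (χ : AlternatingMap ℝ V V (Fin 3)) (a b c : V) :
    χ ![a, b, c] = - χ ![b, a, c] := by
  have hv : ![b, a, c] ∘ Equiv.swap (0 : Fin 3) 1 = ![a, b, c] := by
    funext i; fin_cases i <;> simp [Equiv.swap_apply_def]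
  have h := χ.map_swap ![b, a, c] (show (0 : Fin 3) ≠ 1 by decide)
  rwa [hv] at h

private lemma chi_swap12 (χ : AlternatingMap ℝ V V (Fin 3)) (a b c : V) :
    χ ![a, b, c] = - χ ![a, c, b] := by
  have hv : ![a, c, b] ∘ Equiv.swap (1 : Fin 3) 2 = ![a, b, c] := by
    funext i; fin_cases i <;> simp [Equiv.swap_apply_def]
  have h := χ.map_swap ![a, c, b] (show (1 : Fin 3) ≠ 2 by decide)
  rwa [hv] at h

private lemma chi_cyc (χ : AlternatingMap ℝ V V (Fin 3)) (a b c : V) :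
    χ ![a, b, c] = χ ![b, c, a] := by
  rw [chi_swap01 χ a b c, chi_swap12 χ b a c, neg_neg]

private lemma unit_aux (χ : AlternatingMap ℝ V V (Fin 3))
    (hnorm : ∀ v : Fin 3 → V,
      ⟪χ v, χ v⟫ = Matrix.det (Matrix.of fun i j => ⟪v i, v j⟫))
    (a b c : V) (haa : ⟪a,a⟫ = 1) (hbb : ⟪b,b⟫ = 1) (hcc : ⟪c,c⟫ = 1)
    (hab : ⟪a,b⟫ = 0) (hac : ⟪a,c⟫ = 0) (hbc : ⟪b,c⟫ = 0) :
    ⟪χ ![a,b,c], χ ![a,b,c]⟫ = 1 := by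
  have hba : ⟪b,a⟫ = 0 := by rw [real_inner_comm]; exact hab
  have hca : ⟪c,a⟫ = 0 := by rw [real_inner_comm]; exact hac
  have hcb : ⟪c,b⟫ = 0 := by rw [real_inner_comm]; exact hbc
  rw [hnorm]
  rw [Matrix.det_fin_three]
  simp [haa, hbb, hcc, hab, hac, hbc, hba, hca, hcb, -inner_self_eq_norm_sq_to_K]

private lemma key_aux (χ : AlternatingMap ℝ V V (Fin 3))
    (hnorm : ∀ v : Fin 3 → V,
      ⟪χ v, χ v⟫ = Matrix.det (Matrix.of fun i j => ⟪v i, v j⟫))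
    (a b x y : V) (haa : ⟪a,a⟫ = 1) (hbb : ⟪b,b⟫ = 1) (hxx : ⟪x,x⟫ = 1)
    (hyy : ⟪y,y⟫ = 1) (hab : ⟪a,b⟫ = 0) (hax : ⟪a,x⟫ = 0) (hay : ⟪a,y⟫ = 0)
    (hbx : ⟪b,x⟫ = 0) (hby : ⟪b,y⟫ = 0) (hxy : ⟪x,y⟫ = 0) :
    ⟪χ ![a,b,x], χ ![a,b,y]⟫ = 0 := by
  have hba : ⟪b,a⟫ = 0 := by rw [real_inner_comm]; exact hab
  have hxa : ⟪x,a⟫ = 0 := by rw [real_inner_comm]; exact hax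
  have hya : ⟪y,a⟫ = 0 := by rw [real_inner_comm]; exact hay
  have hxb : ⟪x,b⟫ = 0 := by rw [real_inner_comm]; exact hbx
  have hyb : ⟪y,b⟫ = 0 := by rw [real_inner_comm]; exact hby
  have hyx : ⟪y,x⟫ = 0 := by rw [real_inner_comm]; exact hxy
  have hupd : ∀ z : V, Function.update ![a, b, x] 2 z = ![a, b, z] := by
    intro z; funext i; fin_cases i <;> simp [Function.update]
  have hadd : χ ![a, b, x + y] = χ ![a, b, x] + χ ![a, b, y] := by
    have h := χ.map_update_add ![a, b, x] 2 x y
    rwa [hupd, hupd, hupd] at h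
  have hx1 : ⟪χ ![a,b,x], χ ![a,b,x]⟫ = 1 :=
    unit_aux χ hnorm a b x haa hbb hxx hab hax hbx
  have hy1 : ⟪χ ![a,b,y], χ ![a,b,y]⟫ = 1 :=
    unit_aux χ hnorm a b y haa hbb hyy hab hay hby
  have hcomm : ⟪χ ![a,b,y], χ ![a,b,x]⟫ = ⟪χ ![a,b,x], χ ![a,b,y]⟫ :=
    real_inner_comm _ _
  have hsum := hnorm ![a, b, x + y]
  rw [hadd, Matrix.det_fin_three] at hsum
  simp only [Matrix.of_apply, Matrix.cons_val_zero, Matrix.cons_val_one,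
    Matrix.head_cons, Matrix.cons_val_two, Matrix.tail_cons,
    inner_add_left, inner_add_right] at hsum
  rw [hx1, hy1, hcomm, haa, hbb, hxx, hyy, hab, hax, hay, hbx, hby, hxy, hba,
    hxa, hya, hxb, hyb, hyx] at hsum
  linarith

end Aux

/-- Let `φ` be the Cayley 4-form of a 3-fold vector cross product `χ` on an 8-dimensional
real inner product space `V`.  There is no 5-dimensional subspace `C ⊆ V` on which `φ`
vanishes identically; i.e. branes do not exist in `Spin(7)`-geometry. -/
theorem no_brane_in_spin7
    {V : Type*} [NormedAddCommGroup V] [InnerProductSpace ℝ V]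
    [FiniteDimensional ℝ V] (hV : Module.finrank ℝ V = 8)
    (χ : AlternatingMap ℝ V V (Fin 3))
    (hperp : ∀ (v : Fin 3 → V) (i : Fin 3), ⟪χ v, v i⟫ = 0)
    (hnorm : ∀ v : Fin 3 → V,
      ⟪χ v, χ v⟫ = Matrix.det (Matrix.of fun i j => ⟪v i, v j⟫)) :
    ¬ ∃ C : Submodule ℝ V, Module.finrank ℝ C = 5 ∧
      ∀ a b c d : V, a ∈ C → b ∈ C → c ∈ C → d ∈ C → ⟪χ ![a, b, c], d⟫ = 0 := by
  rintro ⟨C, hC5, hφ⟩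
  -- an orthonormal family of 4 vectors in C, viewed in V
  have hCrank : Module.finrank ℝ C = 5 := hC5
  let bC : OrthonormalBasis (Fin 5) ℝ C :=
    (stdOrthonormalBasis ℝ C).reindex (finCongr hCrank)
  set e : Fin 5 → V := fun i => (bC i : V) with he_def
  have heC : ∀ i, e i ∈ C := fun i => (bC i).2
  have hee : ∀ i j, ⟪e i, e j⟫ = if i = j then 1 else 0 := by
    intro i j
    have h := bC.orthonormal
    rw [orthonormal_iff_ite] at h
    have h2 := h i j
    rwa [Submodule.coe_inner] at h2
  set p := e 1 with hp
  set q := e 2 with hq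
  set r := e 3 with hr
  set s := e 4 with hs
  have hpp : ⟪p,p⟫ = 1 := by simpa using hee 1 1
  have hqq : ⟪q,q⟫ = 1 := by simpa using hee 2 2
  have hrr : ⟪r,r⟫ = 1 := by simpa using hee 3 3
  have hss : ⟪s,s⟫ = 1 := by simpa using hee 4 4
  have hpq : ⟪p,q⟫ = 0 := by simpa using hee 1 2
  have hpr : ⟪p,r⟫ = 0 := by simpa using hee 1 3
  have hps : ⟪p,s⟫ = 0 := by simpa using hee 1 4
  have hqr : ⟪q,r⟫ = 0 := by simpa using hee 2 3
  have hqs : ⟪q,s⟫ = 0 := by simpa using hee 2 4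
  have hrs : ⟪r,s⟫ = 0 := by simpa using hee 3 4
  have hqp : ⟪q,p⟫ = 0 := by rw [real_inner_comm]; exact hpq
  have hrp : ⟪r,p⟫ = 0 := by rw [real_inner_comm]; exact hpr
  have hsp : ⟪s,p⟫ = 0 := by rw [real_inner_comm]; exact hps
  have hrq : ⟪r,q⟫ = 0 := by rw [real_inner_comm]; exact hqr
  have hsq : ⟪s,q⟫ = 0 := by rw [real_inner_comm]; exact hqs
  have hsr : ⟪s,r⟫ = 0 := by rw [real_inner_comm]; exact hrs
  -- the four cross products
  set u1 := χ ![p, q, r] with hu1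
  set u2 := χ ![p, q, s] with hu2
  set u3 := χ ![p, r, s] with hu3
  set u4 := χ ![q, r, s] with hu4
  -- each u lies in the orthogonal complement of C (brane condition)
  have hm1 : u1 ∈ Cᗮ :=
    (Submodule.mem_orthogonal' C u1).2 fun v hv => hφ p q r v (heC 1) (heC 2) (heC 3) hv
  have hm2 : u2 ∈ Cᗮ :=
    (Submodule.mem_orthogonal' C u2).2 fun v hv => hφ p q s v (heC 1) (heC 2) (heC 4) hv
  have hm3 : u3 ∈ Cᗮ :=
    (Submodule.mem_orthogonal' C u3).2 fun v hv => hφ p r s v (heC 1) (heC 3) (heC 4) hv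
  have hm4 : u4 ∈ Cᗮ :=
    (Submodule.mem_orthogonal' C u4).2 fun v hv => hφ q r s v (heC 2) (heC 3) (heC 4) hv
  -- unit norms
  have hu11 : ⟪u1, u1⟫ = 1 := unit_aux χ hnorm p q r hpp hqq hrr hpq hpr hqr
  have hu22 : ⟪u2, u2⟫ = 1 := unit_aux χ hnorm p q s hpp hqq hss hpq hps hqs
  have hu33 : ⟪u3, u3⟫ = 1 := unit_aux χ hnorm p r s hpp hrr hss hpr hps hrs
  have hu44 : ⟪u4, u4⟫ = 1 := unit_aux χ hnorm q r s hqq hrr hss hqr hqs hrs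
  -- pairwise orthogonality among the u's
  have hu12 : ⟪u1, u2⟫ = 0 :=
    key_aux χ hnorm p q r s hpp hqq hrr hss hpq hpr hps hqr hqs hrs
  have hu13 : ⟪u1, u3⟫ = 0 := by
    rw [hu1, chi_swap12 χ p q r, hu3, inner_neg_left,
      key_aux χ hnorm p r q s hpp hrr hqq hss hpr hpq hps hrq hrs hqs]
    ring
  have hu23 : ⟪u2, u3⟫ = 0 := by
    rw [hu2, chi_swap12 χ p q s, hu3, chi_swap12 χ p r s, inner_neg_left,
      inner_neg_right,
      key_aux χ hnorm p s q r hpp hss hqq hrr hps hpq hpr hsq hsr hqr]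
    ring
  have hu14 : ⟪u1, u4⟫ = 0 := by
    rw [hu1, chi_cyc χ p q r, hu4, real_inner_comm,
      key_aux χ hnorm q r s p hqq hrr hss hpp hqr hqs hqp hrs hrp hsp]
  have hu24 : ⟪u2, u4⟫ = 0 := by
    rw [hu2, chi_cyc χ p q s, hu4, chi_swap12 χ q r s, inner_neg_right,
      real_inner_comm,
      key_aux χ hnorm q s r p hqq hss hrr hpp hqs hqr hqp hsr hsp hrp]
    ring
  have hu34 : ⟪u3, u4⟫ = 0 := by
    rw [hu3, chi_cyc χ p r s, hu4, chi_cyc χ q r s, real_inner_comm,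
      key_aux χ hnorm r s q p hrr hss hqq hpp hrs hrq hrp hsq hsp hqp]
  -- four orthonormal vectors in the 3-dimensional space Cᗮ : contradiction
  have hu21 : ⟪u2, u1⟫ = 0 := by rw [real_inner_comm]; exact hu12
  have hu31 : ⟪u3, u1⟫ = 0 := by rw [real_inner_comm]; exact hu13
  have hu32 : ⟪u3, u2⟫ = 0 := by rw [real_inner_comm]; exact hu23
  have hu41 : ⟪u4, u1⟫ = 0 := by rw [real_inner_comm]; exact hu14
  have hu42 : ⟪u4, u2⟫ = 0 := by rw [real_inner_comm]; exact hu24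
  have hu43 : ⟪u4, u3⟫ = 0 := by rw [real_inner_comm]; exact hu34
  set g : Fin 4 → Cᗮ := ![⟨u1, hm1⟩, ⟨u2, hm2⟩, ⟨u3, hm3⟩, ⟨u4, hm4⟩] with hg
  have hgorth : Orthonormal ℝ g := by
    rw [orthonormal_iff_ite]
    intro i j
    fin_cases i <;> fin_cases j <;>
      simp only [hg, Submodule.coe_inner, Matrix.cons_val_zero,
        Matrix.cons_val_one, Matrix.head_cons, Matrix.cons_val_two,
        Matrix.tail_cons, Matrix.cons_val_three, Fin.mk.injEq] <;>
      norm_num [hu11, hu22, hu33, hu44, hu12, hu13, hu14, hu23, hu24, hu34,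
        hu21, hu31, hu32, hu41, hu42, hu43, -inner_self_eq_norm_sq_to_K]
  have hli := hgorth.linearIndependent
  have hcard := hli.fintype_card_le_finrank
  have hdim : Module.finrank ℝ C + Module.finrank ℝ Cᗮ = Module.finrank ℝ V :=
    Submodule.finrank_add_finrank_orthogonal C
  rw [hCrank, hV] at hdim
  rw [Fintype.card_fin] at hcard
  omega
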